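/- Let J = I - N ∈ R^{TD×TD} where N is the block subdiagonal matrix built from A_2,...,A_T. Assume the regularity condition: for all valid t and k ≥ 0, b e^{λk} ≤ ‖A_{t+k-1} ⋯ A_t‖₂ ≤ a e^{λk} with a ≥ 1, b ≤ 1 (products of length k starting at any index t). Then the smallest singular value σ_min(J) = 1/‖J^{-1}‖₂ satisfies (for λ ≠ 0): (1/a)·(e^λ - 1)/(e^{λT} - 1) ≤ σ_min(J) ≤ min(1/(b e^{λ(T-1)}), 1). -/

import Mathlib

/-- The descending product `A_{j+k} ⋯ A_{j+1}` of matrices. -/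
def prodDesc {D : ℕ} (A : ℕ → Matrix (Fin D) (Fin D) ℝ) (j : ℕ) :
    ℕ → Matrix (Fin D) (Fin D) ℝ
  | 0 => 1
  | k + 1 => A (j + k + 1) * prodDesc A j k

lemma prodDesc_zero {D : ℕ} (A : ℕ → Matrix (Fin D) (Fin D) ℝ) (j : ℕ) :
    prodDesc A j 0 = 1 := rfl

lemma prodDesc_succ {D : ℕ} (A : ℕ → Matrix (Fin D) (Fin D) ℝ) (j k : ℕ) :
    prodDesc A j (k + 1) = A (j + k + 1) * prodDesc A j k := rfl

lemma euclCLM_apply {n : Type*} [Fintype n] [DecidableEq n] (M : Matrix n n ℝ)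
    (x : EuclideanSpace ℝ n) (i : n) :
    (Matrix.toEuclideanCLM (𝕜 := ℝ) M x) i = ∑ j, M i j * x j := rfl

lemma eucl_norm_sq {n : Type*} [Fintype n] (x : EuclideanSpace ℝ n) :
    ‖x‖ ^ 2 = ∑ i, (x i) ^ 2 := by
  rw [EuclideanSpace.norm_eq, Real.sq_sqrt (by positivity)]
  simp [sq_abs]

open Finset in
lemma npow_entry {D T : ℕ} (A : ℕ → Matrix (Fin D) (Fin D) ℝ)
    (N : Matrix (Fin T × Fin D) (Fin T × Fin D) ℝ)
    (hN : ∀ p q, N p q = if p.1.val = q.1.val + 1 then A (p.1.val + 1) p.2 q.2 else 0)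
    (k : ℕ) (p q : Fin T × Fin D) :
    (N ^ k) p q = if p.1.val = q.1.val + k then prodDesc A (q.1.val + 1) k p.2 q.2 else 0 := by
  induction k generalizing p q with
  | zero =>
    simp only [pow_zero, Matrix.one_apply, prodDesc, Nat.add_zero, Prod.ext_iff,
      ← Fin.val_eq_val p.1 q.1]
    split_ifs with h1 h2 h3 <;> simp_all [Matrix.one_apply]
  | succ k ih =>
    rw [pow_succ', Matrix.mul_apply]
    by_cases hpq : p.1.val = q.1.val + k + 1
    · have hlt : q.1.val + k < T := by omega
      set s0 : Fin T := ⟨q.1.val + k, hlt⟩ with hs0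
      rw [Fintype.sum_prod_type]
      rw [Finset.sum_eq_single s0]
      · have e1 : ∀ l : Fin D, N p (s0, l) = A (p.1.val + 1) p.2 l := by
          intro l; rw [hN]; exact if_pos (by simp [hs0]; omega)
        have e2 : ∀ l : Fin D, (N ^ k) (s0, l) q = prodDesc A (q.1.val + 1) k l q.2 := by
          intro l; rw [ih]; exact if_pos (by simp [hs0])
        simp only [e1, e2]
        rw [if_pos (show p.1.val = q.1.val + (k + 1) by omega), prodDesc_succ,
          Matrix.mul_apply, show q.1.val + 1 + k + 1 = p.1.val + 1 by omega]
      · intro s _ hs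
        apply Finset.sum_eq_zero
        intro l _
        rw [hN]
        have hne : ¬ (p.1.val = s.val + 1) := by
          intro hc; exact hs (Fin.ext (by simp [hs0]; omega))
        rw [if_neg hne, zero_mul]
      · intro h; exact absurd (Finset.mem_univ s0) h
    · rw [if_neg (show ¬ (p.1.val = q.1.val + (k + 1)) by omega)]
      apply Finset.sum_eq_zero
      intro r _
      rw [hN, ih]
      split_ifs with h1 h2
      · omega
      · exact mul_zero _
      · exact zero_mul _
      · exact zero_mul _





open Finset in
lemma shift_norm_le {D T : ℕ} (k : ℕ) (B : Fin T → Matrix (Fin D) (Fin D) ℝ)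
    (P : Matrix (Fin T × Fin D) (Fin T × Fin D) ℝ)
    (hP : ∀ p q, P p q = if p.1.val = q.1.val + k then B q.1 p.2 q.2 else 0)
    (c : ℝ) (hc : 0 ≤ c) (hB : ∀ s, ‖Matrix.toEuclideanCLM (𝕜 := ℝ) (B s)‖ ≤ c) :
    ‖Matrix.toEuclideanCLM (𝕜 := ℝ) P‖ ≤ c := by
  apply ContinuousLinearMap.opNorm_le_bound _ hc
  intro x
  set blk : Fin T → EuclideanSpace ℝ (Fin D) := fun s => WithLp.toLp 2 (fun j => x (s, j)) with hblk
  set sub : Fin T → Fin T := fun t => ⟨t.val - k, lt_of_le_of_lt (Nat.sub_le _ _) t.2⟩ with hsub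
  have hsubv : ∀ t : Fin T, (sub t).val = t.val - k := fun t => by rw [hsub]
  have hx2 : ‖x‖ ^ 2 = ∑ s, ‖blk s‖ ^ 2 := by
    rw [eucl_norm_sq, Fintype.sum_prod_type]
    exact Finset.sum_congr rfl fun s _ => (eucl_norm_sq (blk s)).symm
  have happ : ∀ t (i : Fin D), (Matrix.toEuclideanCLM (𝕜 := ℝ) P x) (t, i)
      = if k ≤ t.val then (Matrix.toEuclideanCLM (𝕜 := ℝ) (B (sub t)) (blk (sub t))) i else 0 := by
    intro t i
    rw [euclCLM_apply, Fintype.sum_prod_type]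
    by_cases ht : k ≤ t.val
    · rw [if_pos ht, euclCLM_apply]
      rw [Finset.sum_eq_single (sub t)]
      · refine Finset.sum_congr rfl fun j _ => ?_
        rw [hP]
        rw [if_pos (show t.val = (sub t).val + k from by rw [hsubv]; omega)]
      · intro s _ hs
        apply Finset.sum_eq_zero
        intro j _
        rw [hP]
        have hne : ¬ (t.val = s.val + k) := by
          intro hcon
          exact hs (Fin.ext (show s.val = (sub t).val from by rw [hsubv]; omega))
        rw [if_neg hne, zero_mul]
      · intro h; exact absurd (Finset.mem_univ _) h
    · rw [if_neg ht]
      apply Finset.sum_eq_zero; intro s _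
      apply Finset.sum_eq_zero; intro j _
      rw [hP]
      have hne : ¬ (t.val = s.val + k) := by omega
      rw [if_neg hne, zero_mul]
  have key : ‖Matrix.toEuclideanCLM (𝕜 := ℝ) P x‖ ^ 2 ≤ (c * ‖x‖) ^ 2 := by
    rw [eucl_norm_sq, Fintype.sum_prod_type]
    have step1 : ∀ t : Fin T, ∑ i, ((Matrix.toEuclideanCLM (𝕜 := ℝ) P x) (t, i)) ^ 2
        = if k ≤ t.val then ‖Matrix.toEuclideanCLM (𝕜 := ℝ) (B (sub t)) (blk (sub t))‖ ^ 2 else 0 := by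
      intro t
      by_cases ht : k ≤ t.val
      · rw [if_pos ht, eucl_norm_sq]
        exact Finset.sum_congr rfl fun i _ => by rw [happ, if_pos ht]
      · rw [if_neg ht]
        apply Finset.sum_eq_zero
        intro i _
        rw [happ, if_neg ht]; norm_num
    calc ∑ t : Fin T, ∑ i, ((Matrix.toEuclideanCLM (𝕜 := ℝ) P x) (t, i)) ^ 2
        = ∑ t : Fin T, if k ≤ t.val then ‖Matrix.toEuclideanCLM (𝕜 := ℝ) (B (sub t)) (blk (sub t))‖ ^ 2 else 0 :=
          Finset.sum_congr rfl fun t _ => step1 t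
      _ ≤ ∑ t : Fin T, if k ≤ t.val then c ^ 2 * ‖blk (sub t)‖ ^ 2 else 0 := by
          apply Finset.sum_le_sum
          intro t _
          split_ifs with ht
          · have h1 : ‖Matrix.toEuclideanCLM (𝕜 := ℝ) (B (sub t)) (blk (sub t))‖
                ≤ c * ‖blk (sub t)‖ :=
              le_trans ((Matrix.toEuclideanCLM (𝕜 := ℝ) (B (sub t))).le_opNorm _)
                (by gcongr; exact hB _)
            calc ‖Matrix.toEuclideanCLM (𝕜 := ℝ) (B (sub t)) (blk (sub t))‖ ^ 2
                ≤ (c * ‖blk (sub t)‖) ^ 2 := by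
                  have := norm_nonneg (Matrix.toEuclideanCLM (𝕜 := ℝ) (B (sub t)) (blk (sub t)))
                  nlinarith
              _ = c ^ 2 * ‖blk (sub t)‖ ^ 2 := by ring
          · exact le_refl 0
      _ = ∑ t ∈ Finset.univ.filter (fun t : Fin T => k ≤ t.val), c ^ 2 * ‖blk (sub t)‖ ^ 2 := by
          rw [Finset.sum_filter]
      _ = ∑ s ∈ (Finset.univ.filter (fun t : Fin T => k ≤ t.val)).image sub,
            c ^ 2 * ‖blk s‖ ^ 2 := by
          rw [Finset.sum_image]
          intro t1 h1 t2 h2 he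
          simp only [Finset.mem_coe, Finset.mem_filter, Finset.mem_univ, true_and] at h1 h2
          have hv : (sub t1).val = (sub t2).val := congrArg Fin.val he
          rw [hsubv, hsubv] at hv
          exact Fin.ext (by omega)
      _ ≤ ∑ s : Fin T, c ^ 2 * ‖blk s‖ ^ 2 := by
          apply Finset.sum_le_sum_of_subset_of_nonneg (Finset.subset_univ _)
          intro s _ _; positivity
      _ = (c * ‖x‖) ^ 2 := by rw [mul_pow, hx2, Finset.mul_sum]
  exact le_of_pow_le_pow_left₀ two_ne_zero (by positivity) key





open Finset in
lemma block_norm_le {D T : ℕ} (P : Matrix (Fin T × Fin D) (Fin T × Fin D) ℝ)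
    (B : Matrix (Fin D) (Fin D) ℝ) (t0 s0 : Fin T)
    (hPB : ∀ i j, P (t0, i) (s0, j) = B i j) :
    ‖Matrix.toEuclideanCLM (𝕜 := ℝ) B‖ ≤ ‖Matrix.toEuclideanCLM (𝕜 := ℝ) P‖ := by
  apply ContinuousLinearMap.opNorm_le_bound _ (norm_nonneg _)
  intro v
  set x : EuclideanSpace ℝ (Fin T × Fin D) := WithLp.toLp 2 (fun p : Fin T × Fin D => if p.1 = s0 then v p.2 else 0) with hx
  have hxv : ‖x‖ = ‖v‖ := by
    have h2 : ‖x‖ ^ 2 = ‖v‖ ^ 2 := by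
      rw [eucl_norm_sq, eucl_norm_sq, Fintype.sum_prod_type]
      rw [Finset.sum_eq_single s0]
      · exact Finset.sum_congr rfl fun j _ => by rw [hx]; simp
      · intro s _ hs
        apply Finset.sum_eq_zero
        intro j _
        rw [hx]; simp [hs]
      · intro h; exact absurd (Finset.mem_univ _) h
    rw [← Real.sqrt_sq (norm_nonneg x), h2, Real.sqrt_sq (norm_nonneg v)]
  have happ : ∀ i, (Matrix.toEuclideanCLM (𝕜 := ℝ) P x) (t0, i)
      = (Matrix.toEuclideanCLM (𝕜 := ℝ) B v) i := by
    intro i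
    rw [euclCLM_apply, euclCLM_apply, Fintype.sum_prod_type]
    rw [Finset.sum_eq_single s0]
    · refine Finset.sum_congr rfl fun j _ => ?_
      rw [hPB, hx]; simp
    · intro s _ hs
      apply Finset.sum_eq_zero
      intro j _
      rw [hx]; simp [hs]
    · intro h; exact absurd (Finset.mem_univ _) h
  have h2 : ‖Matrix.toEuclideanCLM (𝕜 := ℝ) B v‖ ^ 2
      ≤ ‖Matrix.toEuclideanCLM (𝕜 := ℝ) P x‖ ^ 2 := by
    rw [eucl_norm_sq, eucl_norm_sq (Matrix.toEuclideanCLM (𝕜 := ℝ) P x), Fintype.sum_prod_type]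
    calc ∑ i, ((Matrix.toEuclideanCLM (𝕜 := ℝ) B v) i) ^ 2
        = ∑ i, ((Matrix.toEuclideanCLM (𝕜 := ℝ) P x) (t0, i)) ^ 2 :=
          Finset.sum_congr rfl fun i _ => by rw [happ]
      _ ≤ ∑ t : Fin T, ∑ i, ((Matrix.toEuclideanCLM (𝕜 := ℝ) P x) (t, i)) ^ 2 :=
          Finset.single_le_sum (f := fun t => ∑ i, ((Matrix.toEuclideanCLM (𝕜 := ℝ) P x) (t, i)) ^ 2)
            (fun t _ => by positivity) (Finset.mem_univ t0)
  have h3 : ‖Matrix.toEuclideanCLM (𝕜 := ℝ) B v‖ ≤ ‖Matrix.toEuclideanCLM (𝕜 := ℝ) P x‖ :=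
    le_of_pow_le_pow_left₀ two_ne_zero (norm_nonneg _) h2
  calc ‖Matrix.toEuclideanCLM (𝕜 := ℝ) B v‖ ≤ ‖Matrix.toEuclideanCLM (𝕜 := ℝ) P x‖ := h3
    _ ≤ ‖Matrix.toEuclideanCLM (𝕜 := ℝ) P‖ * ‖x‖ := (Matrix.toEuclideanCLM (𝕜 := ℝ) P).le_opNorm x
    _ = ‖Matrix.toEuclideanCLM (𝕜 := ℝ) P‖ * ‖v‖ := by rw [hxv]

/-- **Lyapunov exponent controls the smallest singular value of the DEER Jacobian.**
Under the LLE regularity condition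
`b e^{λk} ≤ ‖A_{t+k-1} ⋯ A_t‖₂ ≤ a e^{λk}` (with `a ≥ 1`, `0 < b ≤ 1`, `λ ≠ 0`), the
smallest singular value `σ_min(J) = 1/‖J⁻¹‖₂` of the block bidiagonal Jacobian `J`
satisfies `(1/a)(e^λ - 1)/(e^{λT} - 1) ≤ σ_min(J) ≤ min(1/(b e^{λ(T-1)}), 1)`.
Block row `t : Fin T` is 1-based as `t.val + 1`; the product of length `k` starting at
index `t ≥ 1` is `prodDesc A (t-1) k = A_{t+k-1} ⋯ A_t`. -/
theorem lle_controls_sigma_min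
    (D T : ℕ) (hT : 1 ≤ T) (a b lam : ℝ)
    (ha : 1 ≤ a) (hb : b ≤ 1) (hb0 : 0 < b) (hlam : lam ≠ 0)
    (A : ℕ → Matrix (Fin D) (Fin D) ℝ)
    (hreg : ∀ t k : ℕ, 1 ≤ t →
      b * Real.exp (lam * k) ≤
          ‖Matrix.toEuclideanCLM (𝕜 := ℝ) (prodDesc A (t - 1) k)‖ ∧
        ‖Matrix.toEuclideanCLM (𝕜 := ℝ) (prodDesc A (t - 1) k)‖ ≤
          a * Real.exp (lam * k))
    (J : Matrix (Fin T × Fin D) (Fin T × Fin D) ℝ)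
    (hJ : ∀ (t t' : Fin T) (i j : Fin D),
      J (t, i) (t', j) =
        if t = t' then (if i = j then 1 else 0)
        else if t.val = t'.val + 1 then -(A (t.val + 1) i j) else 0) :
    (1 / a) * ((Real.exp lam - 1) / (Real.exp (lam * T) - 1)) ≤
        ‖Matrix.toEuclideanCLM (𝕜 := ℝ) J⁻¹‖⁻¹ ∧
      ‖Matrix.toEuclideanCLM (𝕜 := ℝ) J⁻¹‖⁻¹ ≤
        min (1 / (b * Real.exp (lam * ((T : ℝ) - 1)))) 1 := by
  -- D must be positive, else `hreg` is contradictory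
  rcases Nat.eq_zero_or_pos D with hD0 | hD
  · exfalso
    subst hD0
    have h := (hreg 1 0 le_rfl).1
    haveI : Subsingleton (EuclideanSpace ℝ (Fin 0)) := by
      unfold EuclideanSpace PiLp; infer_instance
    rw [Subsingleton.elim (Matrix.toEuclideanCLM (𝕜 := ℝ) (prodDesc A 0 0)) 0, norm_zero] at h
    have : (0:ℝ) < b * Real.exp (lam * (0:ℕ)) := by positivity
    linarith
  haveI : Nonempty (Fin D) := ⟨⟨0, hD⟩⟩
  haveI : Nontrivial (EuclideanSpace ℝ (Fin D)) := by
    unfold EuclideanSpace PiLp; infer_instance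
  set N : Matrix (Fin T × Fin D) (Fin T × Fin D) ℝ :=
    fun p q => if p.1.val = q.1.val + 1 then A (p.1.val + 1) p.2 q.2 else 0 with hNdef
  have hN : ∀ p q, N p q = if p.1.val = q.1.val + 1 then A (p.1.val + 1) p.2 q.2 else 0 :=
    fun p q => by rw [hNdef]
  have hJN : J = 1 - N := by
    ext ⟨t, i⟩ ⟨t', j⟩
    rw [hJ, Matrix.sub_apply, Matrix.one_apply, hN]
    by_cases h1 : t = t'
    · subst h1
      rw [if_pos rfl, if_neg (show ¬ ((t:Fin T).val = t.val + 1) by omega)]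
      by_cases h2 : i = j
      · rw [if_pos h2, if_pos (show ((t,i) : Fin T × Fin D) = (t,j) by rw [h2]), sub_zero]
      · rw [if_neg h2, if_neg (show ¬ (((t,i) : Fin T × Fin D) = (t,j)) by simp [h2]), sub_zero]
    · rw [if_neg h1, if_neg (show ¬ (((t,i) : Fin T × Fin D) = (t',j)) by simp [Prod.ext_iff, h1])]
      by_cases h2 : t.val = t'.val + 1
      · rw [if_pos h2, if_pos h2, zero_sub]
      · rw [if_neg h2, if_neg h2, sub_zero]
  have hNT : N ^ T = 0 := by
    ext p q
    rw [npow_entry A N hN T p q, if_neg (by have := p.1.2; omega), Matrix.zero_apply]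
  set S : Matrix (Fin T × Fin D) (Fin T × Fin D) ℝ := ∑ k ∈ Finset.range T, N ^ k with hSdef
  have hmul : J * S = 1 := by
    rw [hJN, hSdef, mul_neg_geom_sum, hNT, sub_zero]
  have hinv : J⁻¹ = S := Matrix.inv_eq_right_inv hmul
  -- entries of S on or below the block diagonal
  have hS : ∀ p q : Fin T × Fin D, q.1.val ≤ p.1.val →
      S p q = prodDesc A (q.1.val + 1) (p.1.val - q.1.val) p.2 q.2 := by
    intro p q hle
    rw [hSdef, Matrix.sum_apply]
    rw [Finset.sum_eq_single (p.1.val - q.1.val)]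
    · rw [npow_entry A N hN, if_pos (by omega)]
    · intro k _ hk
      rw [npow_entry A N hN, if_neg (by omega)]
    · intro hmem
      exact absurd (Finset.mem_range.mpr (by have := p.1.2; omega)) hmem
  -- lower bounds on ‖S‖
  have hlow2 : 1 ≤ ‖Matrix.toEuclideanCLM (𝕜 := ℝ) S‖ := by
    have hb1 : ∀ i j : Fin D, S (⟨0, by omega⟩, i) (⟨0, by omega⟩, j) = (1 : Matrix (Fin D) (Fin D) ℝ) i j := by
      intro i j
      rw [hS _ _ (le_refl 0)]
      rfl
    have := block_norm_le S 1 ⟨0, by omega⟩ ⟨0, by omega⟩ hb1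
    rwa [map_one, norm_one] at this
  have hlow1 : b * Real.exp (lam * ((T:ℝ) - 1)) ≤ ‖Matrix.toEuclideanCLM (𝕜 := ℝ) S‖ := by
    have hb1 : ∀ i j : Fin D, S (⟨T - 1, by omega⟩, i) (⟨0, by omega⟩, j)
        = prodDesc A 1 (T - 1) i j := by
      intro i j
      rw [hS _ _ (by simp)]
      rfl
    have h1 := block_norm_le S (prodDesc A 1 (T - 1)) ⟨T - 1, by omega⟩ ⟨0, by omega⟩ hb1
    have h2 := (hreg 2 (T - 1) (by omega)).1
    have hc : ((T - 1 : ℕ) : ℝ) = (T : ℝ) - 1 := by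
      rw [Nat.cast_sub hT, Nat.cast_one]
    rw [hc] at h2
    have : prodDesc A (2 - 1) (T - 1) = prodDesc A 1 (T - 1) := rfl
    rw [this] at h2
    exact le_trans h2 h1
  have hSpos : 0 < ‖Matrix.toEuclideanCLM (𝕜 := ℝ) S‖ := lt_of_lt_of_le one_pos hlow2
  -- upper bound on ‖S‖
  set r : ℝ := Real.exp lam with hrdef
  have hr0 : 0 < r := Real.exp_pos lam
  have hr1 : r ≠ 1 := fun h => hlam (Real.exp_injective (h.trans Real.exp_zero.symm))
  have hup : ‖Matrix.toEuclideanCLM (𝕜 := ℝ) S‖ ≤ a * ((r ^ T - 1) / (r - 1)) := by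
    rw [hSdef, map_sum]
    refine le_trans (norm_sum_le _ _) ?_
    have hterm : ∀ k ∈ Finset.range T,
        ‖Matrix.toEuclideanCLM (𝕜 := ℝ) (N ^ k)‖ ≤ a * r ^ k := by
      intro k _
      have hrk : a * r ^ k = a * Real.exp (lam * k) := by
        rw [hrdef, ← Real.exp_nat_mul, mul_comm (k:ℝ) lam]
      rw [hrk]
      apply shift_norm_le k (fun s => prodDesc A (s.val + 1) k) (N ^ k)
        (fun p q => npow_entry A N hN k p q) _ (by positivity)
      intro s
      have := (hreg (s.val + 2) k (by omega)).2
      have heq : prodDesc A (s.val + 2 - 1) k = prodDesc A (s.val + 1) k := rfl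
      rwa [heq] at this
    refine le_trans (Finset.sum_le_sum hterm) ?_
    rw [← Finset.mul_sum, geom_sum_eq hr1]
  have hUpos : 0 < a * ((r ^ T - 1) / (r - 1)) := lt_of_lt_of_le hSpos hup
  constructor
  · -- lower bound on σ_min
    have hexp : Real.exp (lam * T) = r ^ T := by
      rw [hrdef, ← Real.exp_nat_mul, mul_comm (T:ℝ) lam]
    rw [hinv, hexp]
    have h1 : (a * ((r ^ T - 1) / (r - 1)))⁻¹ ≤ ‖Matrix.toEuclideanCLM (𝕜 := ℝ) S‖⁻¹ :=
      inv_anti₀ hSpos hup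
    refine le_trans (le_of_eq ?_) h1
    rw [mul_inv, inv_div, one_div]
  · rw [hinv]
    refine le_min ?_ ?_
    · rw [one_div]
      exact inv_anti₀ (by positivity) hlow1
    · exact inv_le_one_of_one_le₀ hlow2
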